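/- arXiv:1802.10561 — 6 statements merged into one kernel-verified Lean document; each statement's English description precedes it below -/
import Mathlib

section
/- Let k be a positive integer and β > 1 a real number satisfying β^{k+1} = β^k + 1. Then for every natural number r, k + 1 + r(r+3)/2 < β^{2(k+r)}. -/
/-- Lemma 4.1 (ii): if `k ≥ 1` and `β > 1` satisfies `β^(k+1) = β^k + 1`, then
`k + 1 + r(r+3)/2 < β^(2(k+r))` for every natural number `r`. -/
theorem beta_pow_gt_quadratic (k : ℕ) (hk : 1 ≤ k) (β : ℝ) (hβ : 1 < β)
    (hroot : β ^ (k + 1) = β ^ k + 1) :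
    ∀ r : ℕ, ((k + 1 + r * (r + 3) / 2 : ℕ) : ℝ) < β ^ (2 * (k + r)) := by
  have ht : 0 < β - 1 := by linarith
  have h1 : β ^ k * (β - 1) = 1 := by
    have h := hroot
    rw [pow_succ] at h
    nlinarith [h]
  have hβk : 1 < β ^ k := one_lt_pow₀ hβ (by omega)
  have ht1 : β - 1 < 1 := by nlinarith
  have hbern : 1 + (k : ℝ) * (β - 1) ≤ β ^ k := by
    have h := one_add_mul_le_pow (a := β - 1) (by linarith) k
    have : (1 + (β - 1)) = β := by ring
    rwa [this] at h
  have hb2k : β ^ (2 * k) * (β - 1) ^ 2 = 1 := by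
    rw [two_mul, pow_add]
    nlinarith [h1]
  have base : (k : ℝ) + 1 < β ^ (2 * k) := by
    have h2 : ((k : ℝ) + 1) * (β - 1) ^ 2 < 1 := by
      nlinarith [mul_le_mul_of_nonneg_right hbern ht.le, h1]
    nlinarith [h2, hb2k, mul_pos ht ht]
  have key : ∀ r : ℕ, (k : ℝ) + 1 + r * (r + 3) / 2 < β ^ (2 * (k + r)) := by
    intro r
    induction r with
    | zero => simpa using base
    | succ n ih =>
      have hbern2 : 1 + (2 * n : ℝ) * (β - 1) ≤ β ^ (2 * n) := by
        have h := one_add_mul_le_pow (a := β - 1) (by linarith) (2 * n)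
        have e : (1 + (β - 1)) = β := by ring
        rw [e] at h
        simpa using h
      have he : β ^ (2 * (k + n)) * (β ^ 2 - 1) = β ^ (2 * n) * (2 * β ^ k + 1) := by
        have e1 : β ^ (2 * (k + n)) = (β ^ k) ^ 2 * β ^ (2 * n) := by
          rw [← pow_mul, ← pow_add]
          congr 1
          ring
        have e3 : β ^ k * β = β ^ k + 1 := by rw [← pow_succ]; exact hroot
        rw [e1]
        linear_combination (β ^ (2 * n) * (β ^ k * (β + 1))) * h1 + β ^ (2 * n) * e3
      have hgrow : (n : ℝ) + 2 ≤ β ^ (2 * (k + n)) * (β ^ 2 - 1) := by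
        rw [he]
        have hn0 : (0 : ℝ) ≤ (n : ℝ) := Nat.cast_nonneg n
        have hmul : (1 + (2 * n : ℝ) * (β - 1)) * (2 * β ^ k + 1) ≤
            β ^ (2 * n) * (2 * β ^ k + 1) := by
          apply mul_le_mul_of_nonneg_right hbern2
          nlinarith
        nlinarith [hmul, h1, hβk, ht.le, mul_nonneg hn0 ht.le]
      have hpow : β ^ (2 * (k + (n + 1))) = β ^ (2 * (k + n)) * β ^ 2 := by
        rw [show 2 * (k + (n + 1)) = 2 * (k + n) + 2 from by ring, pow_add]
      push_cast
      rw [hpow]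
      push_cast at ih
      nlinarith [ih, hgrow]
  intro r
  have hdvd : 2 ∣ r * (r + 3) := by
    rcases Nat.even_or_odd r with ⟨m, hm⟩ | ⟨m, hm⟩
    · exact ⟨m * (r + 3), by subst hm; ring⟩
    · exact ⟨r * (m + 2), by subst hm; ring⟩
  have hc : ((r * (r + 3) / 2 : ℕ) : ℝ) = (r : ℝ) * (r + 3) / 2 := by
    rw [Nat.cast_div hdvd (by norm_num)]
    push_cast
    ring
  have := key r
  push_cast [hc]
  linarith
end

section
/- For each positive integer k, let q_k(n) count binary words of length n with any two 1's separated by at least k zeros, and let β_k be the largest real root of x^{k+1} - x^k - 1. Then there exist positive constants c_k, d_k such that c_k · β_k^n < q_k(n) < d_k · β_k^n for all n ∈ ℕ. -/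
/-- A binary word in which any two occurrences of `true` (the letter 1) are separated
by at least `k` occurrences of `false` (the letter 0). -/
def Separated (k : ℕ) (v : List Bool) : Prop :=
  ∀ i j, i < j → j < v.length → v.getD i false = true → v.getD j false = true → i + k < j

/-- `Q k n` is the number of binary words of length `n` in which any two occurrences of
the letter 1 are separated by at least `k` occurrences of the letter 0. -/
noncomputable def Q (k n : ℕ) : ℕ :=
  Set.ncard {v : List Bool | v.length = n ∧ Separated k v}

def QS (k n : ℕ) : Set (List Bool) := {v : List Bool | v.length = n ∧ Separated k v}

lemma QS_finite (k n : ℕ) : (QS k n).Finite :=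
  (List.finite_length_eq Bool n).subset (fun _ hv => hv.1)

lemma getD_rep_add (w : List Bool) (m : ℕ) : ∀ k,
    (List.replicate k false ++ w).getD (k + m) false = w.getD m false := by
  intro k
  induction k with
  | zero => simp
  | succ k ih =>
    have : k + 1 + m = (k + m) + 1 := by omega
    rw [this, List.replicate_succ, List.cons_append, List.getD_cons_succ, ih]

lemma getD_rep_lt (w : List Bool) : ∀ k j, j < k →
    (List.replicate k false ++ w).getD j false = false := by
  intro k
  induction k with
  | zero => omega
  | succ k ih =>
    intro j hj
    rw [List.replicate_succ, List.cons_append]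
    cases j with
    | zero => simp
    | succ j => rw [List.getD_cons_succ]; exact ih j (by omega)


def oneAt (n i : ℕ) : List Bool := (List.replicate n false).set i true

lemma oneAt_length (n i : ℕ) : (oneAt n i).length = n := by simp [oneAt]

lemma rep_getD (n j : ℕ) : (List.replicate n false).getD j false = false := by
  rcases Nat.lt_or_ge j n with h | h
  · rw [List.getD_eq_getElem _ _ (by simpa using h)]; simp
  · rw [List.getD_eq_default _ _ (by simpa using h)]

lemma oneAt_getD_self {n i : ℕ} (hi : i < n) : (oneAt n i).getD i false = true := by
  rw [List.getD_eq_getElem _ _ (by rw [oneAt_length]; exact hi)]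
  simp [oneAt]

lemma oneAt_getD_ne {n i j : ℕ} (hij : j ≠ i) : (oneAt n i).getD j false = false := by
  rcases Nat.lt_or_ge j n with h | h
  · rw [List.getD_eq_getElem _ _ (by rw [oneAt_length]; exact h)]
    simp only [oneAt]
    rw [List.getElem_set_ne (fun h => hij h.symm)]
    simp
  · rw [List.getD_eq_default _ _ (by rw [oneAt_length]; exact h)]

lemma Q_base (k n : ℕ) (hn : n ≤ k + 1) : Q k n = n + 1 := by
  have hset : QS k n = insert (List.replicate n false) (oneAt n '' Set.Iio n) := by
    ext v
    constructor
    · rintro ⟨hlen, hsep⟩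
      have hone : ∀ i j, i < j → j < n → v.getD i false = true → v.getD j false = true → False := by
        intro i j hij hj hi' hj'
        have := hsep i j hij (by omega) hi' hj'
        omega
      by_cases h : ∃ i < n, v.getD i false = true
      · obtain ⟨i, hi, hti⟩ := h
        right
        refine ⟨i, hi, ?_⟩
        apply List.ext_getElem (by rw [hlen, oneAt_length])
        intro j hj1 hj2
        have hjn : j < n := by omega
        rw [← List.getD_eq_getElem _ false hj1, ← List.getD_eq_getElem v false hj2]
        by_cases hji : j = i
        · subst hji
          rw [hti, oneAt_getD_self hjn]
        · rw [oneAt_getD_ne hji]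
          by_contra hvj
          have hvj' : v.getD j false = true := by
            cases hb : v.getD j false
            · exact absurd hb.symm hvj
            · rfl
          rcases Nat.lt_or_ge j i with h2 | h2
          · exact hone j i h2 hi hvj' hti
          · exact hone i j (lt_of_le_of_ne h2 (Ne.symm hji)) hjn hti hvj'
      · left
        push_neg at h
        apply List.ext_getElem (by rw [hlen]; simp)
        intro j hj1 hj2
        have hjn : j < n := by omega
        rw [← List.getD_eq_getElem v false hj1, ← List.getD_eq_getElem _ false hj2,
          rep_getD]
        have := h j hjn
        cases hb : v.getD j false
        · rfl
        · exact absurd hb this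
    · rintro (rfl | ⟨i, hi, rfl⟩)
      · refine ⟨by simp, ?_⟩
        intro i j hij hj hti
        rw [rep_getD] at hti; exact absurd hti (by simp)
      · refine ⟨oneAt_length n i, ?_⟩
        intro a b hab hb hta htb
        exfalso
        have h1 : a ≠ i ∨ b ≠ i := by omega
        rcases h1 with h1 | h1
        · rw [oneAt_getD_ne h1] at hta; exact absurd hta (by simp)
        · rw [oneAt_getD_ne h1] at htb; exact absurd htb (by simp)
  have hnotmem : List.replicate n false ∉ oneAt n '' Set.Iio n := by
    rintro ⟨i, hi, heq⟩
    have := congrArg (fun l => l.getD i false) heq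
    simp only [oneAt_getD_self hi, rep_getD] at this
    exact absurd this (by simp)
  have hinj : Set.InjOn (oneAt n) (Set.Iio n) := by
    intro i hi j hj hij
    by_contra hne
    have := congrArg (fun l => l.getD i false) hij
    simp only [oneAt_getD_self hi, oneAt_getD_ne hne] at this
    exact absurd this (by simp)
  have hfin : (oneAt n '' Set.Iio n).Finite := (Set.finite_Iio n).image _
  have h2 : Q k n = (oneAt n '' Set.Iio n).ncard + 1 := by
    rw [Q, ← QS, hset, Set.ncard_insert_of_notMem hnotmem hfin]
  rw [h2, Set.ncard_image_of_injOn hinj]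
  congr 1
  rw [← Finset.coe_Iio, Set.ncard_coe_finset, Nat.card_Iio]

lemma sep_cons_false {k : ℕ} {w : List Bool} (h : Separated k w) :
    Separated k (false :: w) := by
  intro i j hij hj hti htj
  cases i with
  | zero => simp [List.getD_cons_zero] at hti
  | succ i =>
    cases j with
    | zero => omega
    | succ j =>
      rw [List.getD_cons_succ] at hti htj
      have := h i j (by omega) (by simpa using hj) hti htj
      omega

lemma sep_cons_true {k : ℕ} {w : List Bool} (h : Separated k w) :
    Separated k (true :: (List.replicate k false ++ w)) := by
  intro i j hij hj hti htj
  cases j with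
  | zero => omega
  | succ j =>
    rw [List.getD_cons_succ] at htj
    have hjk : k ≤ j := by
      by_contra hc
      rw [getD_rep_lt w k j (by omega)] at htj
      exact absurd htj (by simp)
    obtain ⟨m, rfl⟩ : ∃ m, j = k + m := ⟨j - k, by omega⟩
    rw [getD_rep_add] at htj
    cases i with
    | zero => omega
    | succ i =>
      rw [List.getD_cons_succ] at hti
      have hik : k ≤ i := by
        by_contra hc
        rw [getD_rep_lt w k i (by omega)] at hti
        exact absurd hti (by simp)
      obtain ⟨a, rfl⟩ : ∃ a, i = k + a := ⟨i - k, by omega⟩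
      rw [getD_rep_add] at hti
      have hm : m < w.length := by
        simp only [List.length_cons, List.length_append, List.length_replicate] at hj
        omega
      have := h a m (by omega) hm hti htj
      omega

lemma sep_tail {k : ℕ} {b : Bool} {w : List Bool} (h : Separated k (b :: w)) :
    Separated k w := by
  intro i j hij hj hti htj
  have := h (i + 1) (j + 1) (by omega) (by simpa using Nat.succ_lt_succ hj)
    (by rwa [List.getD_cons_succ]) (by rwa [List.getD_cons_succ])
  omega

lemma Q_rec (k n : ℕ) (hk : 1 ≤ k) : Q k (n + k + 1) = Q k (n + k) + Q k n := by
  classical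
  set f : List Bool → List Bool := fun w => false :: w with hf
  set g : List Bool → List Bool := fun w => true :: (List.replicate k false ++ w) with hg
  have hset : QS k (n + k + 1) = (f '' QS k (n + k)) ∪ (g '' QS k n) := by
    ext v
    constructor
    · rintro ⟨hlen, hsep⟩
      match v, hlen with
      | b :: w, hlen =>
        have hwlen : w.length = n + k := by simpa using hlen
        cases b with
        | false => exact Or.inl ⟨w, ⟨hwlen, sep_tail hsep⟩, rfl⟩
        | true =>
          right
          have hzero : ∀ j, 1 ≤ j → j ≤ k → (true :: w).getD j false = false := by
            intro j h1 h2
            cases hb : (true :: w).getD j false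
            · rfl
            · have := hsep 0 j (by omega) (by simp; omega) (by simp) hb
              omega
          have hwz : ∀ j, j < k → w.getD j false = false := by
            intro j hj
            have := hzero (j + 1) (by omega) (by omega)
            rwa [List.getD_cons_succ] at this
          have htake : w.take k = List.replicate k false := by
            rw [List.eq_replicate_iff]
            constructor
            · rw [List.length_take]; omega
            · intro b hb
              obtain ⟨i, hi, rfl⟩ := List.mem_iff_getElem.1 hb
              have hik : i < k := by simp [List.length_take] at hi; omega
              have : (w.take k)[i] = w[i]'(by simp at hi ⊢; omega) := by
                exact List.getElem_take
              rw [this, ← List.getD_eq_getElem w false]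
              exact hwz i hik
          have hvw : (true : Bool) :: w = g (w.drop k) := by
            rw [hg]
            simp only
            rw [← htake, List.take_append_drop]
          have hdlen : (w.drop k).length = n := by simp [hwlen]
          have hdsep : Separated k (w.drop k) := by
            intro i j hij hj hti htj
            have hget : ∀ m, m < (w.drop k).length →
                (w.drop k).getD m false = (true :: w).getD (k + 1 + m) false := by
              intro m hm
              have : (true : Bool) :: w = true :: (List.replicate k false ++ w.drop k) := by
                rw [hvw]
              rw [this]
              have h1 : k + 1 + m = (k + m) + 1 := by omega
              rw [h1, List.getD_cons_succ, getD_rep_add]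
            have h1 := hget i (by omega)
            have h2 := hget j hj
            have := hsep (k + 1 + i) (k + 1 + j) (by omega)
              (by simp only [List.length_cons, hwlen]; omega)
              (h1 ▸ hti) (h2 ▸ htj)
            omega
          exact ⟨w.drop k, ⟨hdlen, hdsep⟩, hvw.symm⟩
    · rintro (⟨w, ⟨hwl, hws⟩, rfl⟩ | ⟨w, ⟨hwl, hws⟩, rfl⟩)
      · exact ⟨by simp [hf, hwl], sep_cons_false hws⟩
      · refine ⟨?_, sep_cons_true hws⟩
        simp [hg, hwl]
        omega
  have hdisj : Disjoint (f '' QS k (n + k)) (g '' QS k n) := by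
    rw [Set.disjoint_left]
    rintro v ⟨w, _, rfl⟩ ⟨u, _, hu⟩
    have := congrArg (fun l => l.headI) hu
    simp [hf, hg] at this
  have hfinj : Function.Injective f := fun a b h => by simpa [hf] using h
  have hginj : Function.Injective g := by
    intro a b h
    simp only [hg, List.cons.injEq, true_and] at h
    exact List.append_cancel_left h
  rw [Q, ← QS, hset,
    Set.ncard_union_eq hdisj ((QS_finite k (n + k)).image f) ((QS_finite k n).image g),
    Set.ncard_image_of_injective _ hfinj, Set.ncard_image_of_injective _ hginj]
  rfl

/-- If `β` is the largest real root of `x^(k+1) - x^k - 1`, then there are positive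
constants `c, d` with `c·β^n < q_k(n) < d·β^n` for all `n`. -/
theorem Q_growth (k : ℕ) (hk : 1 ≤ k) (β : ℝ) (hβ : 1 < β)
    (hroot : β ^ (k + 1) = β ^ k + 1)
    (hmax : ∀ x : ℝ, x ^ (k + 1) = x ^ k + 1 → x ≤ β) :
    ∃ c > (0 : ℝ), ∃ d > (0 : ℝ),
      ∀ n : ℕ, c * β ^ n < (Q k n : ℝ) ∧ (Q k n : ℝ) < d * β ^ n := by
  have hβ0 : (0 : ℝ) < β := by linarith
  refine ⟨1 / (2 * β ^ (k + 1)), by positivity, (k + 3 : ℝ), by positivity, ?_⟩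
  have hkey : ∀ m : ℕ, β ^ (m + k + 1) = β ^ (m + k) + β ^ m := by
    intro m
    have h1 : β ^ (m + k + 1) = β ^ m * β ^ (k + 1) := by ring
    rw [h1, hroot, pow_add]; ring
  intro n
  induction n using Nat.strong_induction_on with
  | _ n ih =>
    rcases Nat.lt_or_ge n (k + 2) with h | h
    · rw [Q_base k n (by omega)]
      push_cast
      have hb1 : (1 : ℝ) ≤ β ^ n := one_le_pow₀ hβ.le
      have hmon : β ^ n ≤ β ^ (k + 1) := pow_le_pow_right₀ hβ.le (by omega)
      constructor
      · have h2 : 1 / (2 * β ^ (k + 1)) * β ^ n ≤ 1 / 2 := by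
          rw [div_mul_eq_mul_div, one_mul, div_le_div_iff₀ (by positivity) (by norm_num)]
          linarith
        have : (1 : ℝ) ≤ (n : ℝ) + 1 := by have : (0:ℝ) ≤ n := Nat.cast_nonneg n; linarith
        linarith
      · have h2 : (n : ℝ) + 1 ≤ (k : ℝ) + 2 := by
          have : (n : ℝ) ≤ (k : ℝ) + 1 := by exact_mod_cast Nat.lt_succ_iff.mp (by omega)
          linarith
        have h3 : ((k : ℝ) + 3) ≤ ((k : ℝ) + 3) * β ^ n := by
          nlinarith
        linarith
    · obtain ⟨m, rfl⟩ : ∃ m, n = m + k + 1 := ⟨n - k - 1, by omega⟩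
      have hQ : (Q k (m + k + 1) : ℝ) = (Q k (m + k) : ℝ) + (Q k m : ℝ) := by
        exact_mod_cast congrArg (Nat.cast : ℕ → ℝ) (Q_rec k m hk)
      have ih1 := ih (m + k) (by omega)
      have ih2 := ih m (by omega)
      rw [hQ, hkey m]
      constructor
      · have := ih1.1; have := ih2.1; nlinarith
      · have := ih1.2; have := ih2.2; nlinarith
end

section
/- For each positive integer k define γ_k = max over k+1 ≤ n ≤ 2(k+1) of (log q_k(n))/n, where q_k(n) counts binary words of length n with any two 1's separated by at least k zeros. Then γ_k = max over all n ≥ k+1 of (log q_k(n))/n; that is, q_k(n) ≤ exp(γ_k · n) for every n ≥ k+1. -/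
lemma sep_take (k m : ℕ) {v : List Bool} (h : Separated k v) : Separated k (v.take m) := by
  intro i j hij hj h1 h2
  rw [List.length_take] at hj
  have hjm : j < m := lt_of_lt_of_le hj (min_le_left _ _)
  have hjv : j < v.length := lt_of_lt_of_le hj (min_le_right _ _)
  apply h i j hij hjv
  · rwa [List.getD_eq_getElem?_getD, ← List.getElem?_take_of_lt (lt_trans hij hjm),
      ← List.getD_eq_getElem?_getD]
  · rwa [List.getD_eq_getElem?_getD, ← List.getElem?_take_of_lt hjm,
      ← List.getD_eq_getElem?_getD]

lemma sep_drop (k m : ℕ) {v : List Bool} (h : Separated k v) : Separated k (v.drop m) := by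
  intro i j hij hj h1 h2
  rw [List.length_drop] at hj
  have : (m + i) + k < m + j := by
    apply h (m + i) (m + j) (by omega) (by omega)
    · rwa [List.getD_eq_getElem?_getD, ← List.getElem?_drop, ← List.getD_eq_getElem?_getD]
    · rwa [List.getD_eq_getElem?_getD, ← List.getElem?_drop, ← List.getD_eq_getElem?_getD]
  omega

lemma sep_finite (k n : ℕ) : {v : List Bool | v.length = n ∧ Separated k v}.Finite :=
  (List.finite_length_eq Bool n).subset fun _ h => h.1

lemma Q_pos (k n : ℕ) : 1 ≤ Q k n := by
  rw [Q, Nat.one_le_iff_ne_zero, ← Nat.pos_iff_ne_zero, Set.ncard_pos (sep_finite k n)]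
  refine ⟨List.replicate n false, by simp, fun i j hij hj h1 _ => ?_⟩
  rw [List.getD_eq_getElem?_getD, List.getElem?_replicate] at h1
  split_ifs at h1 <;> simp_all

lemma Q_submul (k m n : ℕ) : Q k (m + n) ≤ Q k m * Q k n := by
  classical
  set A := {v : List Bool | v.length = m ∧ Separated k v}
  set B := {v : List Bool | v.length = n ∧ Separated k v}
  have hprod : (A ×ˢ B).ncard = A.ncard * B.ncard := by
    rw [Set.ncard_eq_toFinset_card _ ((sep_finite k m).prod (sep_finite k n)),
      Set.ncard_eq_toFinset_card _ (sep_finite k m),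
      Set.ncard_eq_toFinset_card _ (sep_finite k n), ← Finset.card_product]
    congr 1
    ext x
    simp [Set.Finite.mem_toFinset]
  rw [Q, Q, Q, ← hprod]
  refine Set.ncard_le_ncard_of_injOn (fun v => (v.take m, v.drop m)) ?_ ?_
    ((sep_finite k m).prod (sep_finite k n))
  · rintro v ⟨hl, hs⟩
    exact ⟨⟨by simp [hl], sep_take k m hs⟩, ⟨by simp [hl], sep_drop k m hs⟩⟩
  · intro v1 h1 v2 h2 he
    simp only [Prod.mk.injEq] at he
    rw [← List.take_append_drop m v1, ← List.take_append_drop m v2, he.1, he.2]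

lemma Q_pow (k b s : ℕ) : Q k ((k+1)*b + s) ≤ Q k (k+1)^b * Q k s := by
  induction b with
  | zero => simp
  | succ b ih =>
    have : (k+1)*(b+1) + s = (k+1) + ((k+1)*b + s) := by ring
    rw [this]
    calc Q k ((k+1) + ((k+1)*b + s)) ≤ Q k (k+1) * Q k ((k+1)*b + s) := Q_submul _ _ _
      _ ≤ Q k (k+1) * (Q k (k+1)^b * Q k s) := Nat.mul_le_mul_left _ ih
      _ = Q k (k+1)^(b+1) * Q k s := by ring

/-- The maximum of `(log q_k(n))/n` over `k+1 ≤ n ≤ 2(k+1)` equals the supremum over all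
`n ≥ k+1`; in particular `q_k(n) ≤ exp(γ_k · n)` for every `n ≥ k+1`. -/
theorem gamma_max (k : ℕ) (hk : 1 ≤ k) (γ : ℝ)
    (hγ : γ = sSup {x : ℝ | ∃ n : ℕ, k + 1 ≤ n ∧ n ≤ 2 * (k + 1) ∧
      x = Real.log (Q k n) / n}) :
    (∀ n : ℕ, k + 1 ≤ n → (Q k n : ℝ) ≤ Real.exp (γ * n)) ∧
    γ = sSup {x : ℝ | ∃ n : ℕ, k + 1 ≤ n ∧ x = Real.log (Q k n) / n} := by
  set S := {x : ℝ | ∃ n : ℕ, k + 1 ≤ n ∧ n ≤ 2 * (k + 1) ∧ x = Real.log (Q k n) / n} with hS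
  have hSfin : S.Finite := by
    apply ((Set.finite_Icc (k+1) (2*(k+1))).image (fun n : ℕ => Real.log (Q k n) / n)).subset
    rintro x ⟨n, h1, h2, rfl⟩
    exact ⟨n, ⟨h1, h2⟩, rfl⟩
  have hSne : S.Nonempty := ⟨_, k+1, le_refl _, by omega, rfl⟩
  have hγmem : γ ∈ S := hγ ▸ hSne.csSup_mem hSfin
  have hγge : ∀ m : ℕ, k + 1 ≤ m → m ≤ 2 * (k + 1) →
      Real.log (Q k m) ≤ γ * m := by
    intro m h1 h2
    have hm : (0:ℝ) < m := by exact_mod_cast (by omega : 0 < m)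
    have : Real.log (Q k m) / m ≤ γ := hγ ▸ le_csSup hSfin.bddAbove ⟨m, h1, h2, rfl⟩
    calc Real.log (Q k m) = Real.log (Q k m) / m * m := by field_simp
      _ ≤ γ * m := by nlinarith
  have hQexp : ∀ m : ℕ, k + 1 ≤ m → m ≤ 2 * (k + 1) →
      (Q k m : ℝ) ≤ Real.exp (γ * m) := by
    intro m h1 h2
    have hQ1 : (1:ℝ) ≤ (Q k m : ℝ) := by exact_mod_cast Q_pos k m
    calc (Q k m : ℝ) = Real.exp (Real.log (Q k m)) :=
          (Real.exp_log (by linarith)).symm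
      _ ≤ Real.exp (γ * m) := Real.exp_le_exp.2 (hγge m h1 h2)
  have main : ∀ n : ℕ, k + 1 ≤ n → (Q k n : ℝ) ≤ Real.exp (γ * n) := by
    intro n hn
    obtain ⟨b, s, hns, hs1, hs2⟩ : ∃ b s : ℕ, n = (k+1)*b + s ∧ k+1 ≤ s ∧ s ≤ 2*(k+1) := by
      have hmod := Nat.mod_lt n (show 0 < k+1 by omega)
      have hdm := Nat.div_add_mod n (k+1)
      have hd : 1 ≤ n / (k+1) := Nat.one_le_div_iff (by omega) |>.2 hn
      have hmul : (k+1) * (n/(k+1)) = (k+1) * (n/(k+1) - 1) + (k+1) := by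
        have h1 : n/(k+1) - 1 + 1 = n/(k+1) := by omega
        calc (k+1) * (n/(k+1)) = (k+1) * ((n/(k+1)-1)+1) := by rw [h1]
          _ = (k+1) * (n/(k+1) - 1) + (k+1) := by ring
      exact ⟨n/(k+1) - 1, n % (k+1) + (k+1), by omega, by omega, by omega⟩
    have h1 : (Q k n : ℝ) ≤ (Q k (k+1) : ℝ)^b * (Q k s : ℝ) := by
      rw [hns]
      exact_mod_cast Q_pow k b s
    have h2 : (Q k (k+1) : ℝ) ≤ Real.exp (γ * (k+1)) := by
      exact_mod_cast hQexp (k+1) (le_refl _) (by omega)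
    have h3 : (Q k s : ℝ) ≤ Real.exp (γ * s) := hQexp s hs1 hs2
    have hQnn : (0:ℝ) ≤ (Q k (k+1) : ℝ) := by positivity
    have hQsnn : (0:ℝ) ≤ (Q k s : ℝ) := by positivity
    calc (Q k n : ℝ) ≤ (Q k (k+1) : ℝ)^b * (Q k s : ℝ) := h1
      _ ≤ Real.exp (γ * (k+1))^b * Real.exp (γ * s) := by
          gcongr
      _ = Real.exp (γ * ((k+1)*b + s)) := by
          rw [← Real.exp_nat_mul, ← Real.exp_add]
          congr 1
          push_cast
          ring
      _ = Real.exp (γ * n) := by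
          congr 1
          rw [hns]
          push_cast
          ring
  refine ⟨main, ?_⟩
  set T := {x : ℝ | ∃ n : ℕ, k + 1 ≤ n ∧ x = Real.log (Q k n) / n} with hT
  have hγT : γ ∈ T := by
    obtain ⟨n, h1, _, h3⟩ := hγmem
    exact ⟨n, h1, h3⟩
  have hub : ∀ x ∈ T, x ≤ γ := by
    rintro x ⟨n, h1, rfl⟩
    have hn : (0:ℝ) < n := by exact_mod_cast (by omega : 0 < n)
    have hQ1 : (1:ℝ) ≤ (Q k n : ℝ) := by exact_mod_cast Q_pos k n
    have : Real.log (Q k n) ≤ γ * n := by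
      calc Real.log (Q k n) ≤ Real.log (Real.exp (γ * n)) :=
            Real.log_le_log (by linarith) (main n h1)
        _ = γ * n := Real.log_exp _
    rw [div_le_iff₀ hn]
    linarith
  exact le_antisymm (le_csSup ⟨γ, hub⟩ hγT) (csSup_le ⟨γ, hγT⟩ hub)
end

section
/- With γ_k = max_{0 ≤ r ≤ k+1} (log(k+2+r(r+3)/2))/(k+r+1) and β_k the largest real root of x^{k+1}-x^k-1, for every integer k ≥ 2 one has γ_{k-1} < 2 log β_k. -/
/-- For `k ≥ 2`, with `β_k` the largest real root of `x^(k+1) - x^k - 1` and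
`γ_{k-1} = max_{0 ≤ r ≤ k} (log(k+1+r(r+3)/2))/(k+r)`, one has `γ_{k-1} < 2 log β_k`. -/
theorem gamma_lt_two_log_beta (k : ℕ) (hk : 2 ≤ k) (β : ℝ) (hβ : 1 < β)
    (hroot : β ^ (k + 1) = β ^ k + 1)
    (hmax : ∀ x : ℝ, x ^ (k + 1) = x ^ k + 1 → x ≤ β) :
    sSup {x : ℝ | ∃ r : ℕ, r ≤ k ∧
        x = Real.log ((k + 1 + r * (r + 3) / 2 : ℕ) : ℝ) / ((k + r : ℕ) : ℝ)}
      < 2 * Real.log β := by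
  have hβ0 : (0:ℝ) < β := lt_trans one_pos hβ
  -- key inductive inequality : β^(k+r) ≥ β^k + r
  have key : ∀ r : ℕ, (β ^ k + r : ℝ) ≤ β ^ (k + r) := by
    intro r
    induction r with
    | zero => simp
    | succ n ih =>
      have h1 : β ^ (k + (n + 1)) = β ^ (k + n) + β ^ n := by
        have e : k + (n + 1) = n + (k + 1) := by omega
        rw [e, pow_add, hroot, mul_add, mul_one, ← pow_add, add_comm n k]
      have h2 : (1:ℝ) ≤ β ^ n := one_le_pow₀ hβ.le
      push_cast
      rw [h1]
      push_cast at ih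
      linarith
  have hbk1 : (1:ℝ) < β ^ k := one_lt_pow₀ hβ (by omega)
  -- bound on each element
  have elem : ∀ r : ℕ, r ≤ k →
      Real.log ((k + 1 + r * (r + 3) / 2 : ℕ) : ℝ) / ((k + r : ℕ) : ℝ)
        < 2 * Real.log β := by
    intro r hr
    set N : ℕ := k + 1 + r * (r + 3) / 2 with hN
    have hNpos : 0 < N := by omega
    have hcast : (N:ℝ) ≤ (k:ℝ) + 1 + (r:ℝ) * ((r:ℝ) + 3) / 2 := by
      have := Nat.cast_div_le (α := ℝ) (m := r * (r + 3)) (n := 2)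
      rw [hN]
      push_cast at this ⊢
      linarith
    have hkr : (β ^ k + r : ℝ) ≤ β ^ (k + r) := key r
    have h2k : (β ^ k + k : ℝ) ≤ β ^ (k + k) := key k
    have hsq : β ^ (2 * (k + r)) = (β ^ (k + r)) ^ 2 := by
      rw [← pow_mul, mul_comm]
    have hsq2 : β ^ (k + k) = (β ^ k) ^ 2 := by rw [← pow_mul]; ring_nf
    have hBpos : (0:ℝ) < β ^ k + r := by positivity
    have hB2 : (β ^ k + (r:ℝ)) ^ 2 ≤ (β ^ (k + r)) ^ 2 := by
      apply pow_le_pow_left₀ hBpos.le hkr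
    have hNlt : (N:ℝ) < β ^ (2 * (k + r)) := by
      rw [hsq]
      rw [hsq2] at h2k
      have hr0 : (0:ℝ) ≤ (r:ℝ) := Nat.cast_nonneg r
      nlinarith [sq_nonneg ((r:ℝ) - 1), mul_le_mul_of_nonneg_left hbk1.le hr0]
    have hlog : Real.log (N:ℝ) < (2 * (k + r) : ℕ) * Real.log β := by
      rw [← Real.log_pow]
      exact Real.log_lt_log (by exact_mod_cast hNpos) hNlt
    have hkrpos : (0:ℝ) < ((k + r : ℕ) : ℝ) := by
      have : 0 < k + r := by omega
      exact_mod_cast this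
    rw [div_lt_iff₀ hkrpos]
    push_cast at hlog ⊢
    linarith
  -- now the sSup
  set S : Set ℝ := {x : ℝ | ∃ r : ℕ, r ≤ k ∧
      x = Real.log ((k + 1 + r * (r + 3) / 2 : ℕ) : ℝ) / ((k + r : ℕ) : ℝ)} with hS
  have hSeq : S = (fun r : ℕ => Real.log ((k + 1 + r * (r + 3) / 2 : ℕ) : ℝ) /
      ((k + r : ℕ) : ℝ)) '' (Set.Iic k) := by
    ext x
    simp only [hS, Set.mem_setOf_eq, Set.mem_image, Set.mem_Iic]
    constructor
    · rintro ⟨r, hr, rfl⟩; exact ⟨r, hr, rfl⟩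
    · rintro ⟨r, hr, rfl⟩; exact ⟨r, hr, rfl⟩
  have hfin : S.Finite := by rw [hSeq]; exact (Set.finite_Iic k).image _
  have hne : S.Nonempty := ⟨_, ⟨0, Nat.zero_le k, rfl⟩⟩
  rw [hfin.csSup_lt_iff hne]
  rintro x ⟨r, hr, rfl⟩
  exact elem r hr
end

section
/- Let w be an infinite word over {0,1} that is not ultimately periodic and whose complexity satisfies p_w(2) ≤ 3. Then 00 and 11 cannot both be factors of w; consequently either w contains no factor 11 (so some shift of w is a concatenation of blocks from {0, 10}) or w contains no factor 00. -/
/-- `v` is a factor of the infinite word `w`. -/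
def IsFactor {A : Type*} (w : ℕ → A) (v : List A) : Prop :=
  ∃ i, v = (List.range v.length).map (fun j => w (i + j))

/-- The complexity function of the infinite word `w`. -/
noncomputable def Complexity {A : Type*} (w : ℕ → A) (n : ℕ) : ℕ :=
  Set.ncard {v : List A | v.length = n ∧ IsFactor w v}

/-- `w` is ultimately periodic. -/
def UltimatelyPeriodic {A : Type*} (w : ℕ → A) : Prop :=
  ∃ N p : ℕ, 1 ≤ p ∧ ∀ n, N ≤ n → w (n + p) = w n

lemma isFactor_pair {w : ℕ → Bool} {a b : Bool} {i : ℕ}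
    (ha : w i = a) (hb : w (i + 1) = b) : IsFactor w [a, b] := by
  refine ⟨i, ?_⟩
  simp [List.range_succ, ha.symm, hb.symm]

/-- If `w` is a non ultimately periodic binary word with `p_w(2) ≤ 3`, then `00` and `11`
cannot both be factors of `w`: either `w` contains no factor `11` or no factor `00`. -/
theorem not_both_squares (w : ℕ → Bool) (hnp : ¬ UltimatelyPeriodic w)
    (hcomp : Complexity w 2 ≤ 3) :
    (∀ i, ¬ (w i = true ∧ w (i + 1) = true)) ∨
    (∀ i, ¬ (w i = false ∧ w (i + 1) = false)) := by
  by_contra h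
  push_neg at h
  obtain ⟨⟨i1, h11, h11'⟩, ⟨i0, h00, h00'⟩⟩ := h
  -- `01` occurs
  have h01 : ∃ i, w i = false ∧ w (i + 1) = true := by
    by_contra hc
    push_neg at hc
    have hz : ∀ n, i0 ≤ n → w n = false := by
      intro n hn
      induction n with
      | zero => have h0 : i0 = 0 := Nat.le_zero.mp hn; rw [← h0]; exact h00
      | succ m ih =>
        rcases Nat.lt_or_ge i0 (m + 1) with hlt | hge
        · have hm : w m = false := ih (by omega)
          cases hw : w (m + 1)
          · rfl
          · exact absurd hw (hc m hm)
        · have : i0 = m + 1 := by omega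
          rw [← this]; exact h00
    exact hnp ⟨i0, 1, le_refl 1, fun n hn => by
      rw [hz (n + 1) (by omega), hz n hn]⟩
  -- `10` occurs
  have h10 : ∃ i, w i = true ∧ w (i + 1) = false := by
    by_contra hc
    push_neg at hc
    have hz : ∀ n, i1 ≤ n → w n = true := by
      intro n hn
      induction n with
      | zero => have h0 : i1 = 0 := Nat.le_zero.mp hn; rw [← h0]; exact h11
      | succ m ih =>
        rcases Nat.lt_or_ge i1 (m + 1) with hlt | hge
        · have hm : w m = true := ih (by omega)
          cases hw : w (m + 1)
          · exact absurd hw (hc m hm)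
          · rfl
        · have : i1 = m + 1 := by omega
          rw [← this]; exact h11
    exact hnp ⟨i1, 1, le_refl 1, fun n hn => by
      rw [hz (n + 1) (by omega), hz n hn]⟩
  obtain ⟨j01, hj01, hj01'⟩ := h01
  obtain ⟨j10, hj10, hj10'⟩ := h10
  -- four distinct factors of length 2
  set F : Set (List Bool) := {v : List Bool | v.length = 2 ∧ IsFactor w v} with hF
  have hfin : F.Finite := by
    apply Set.Finite.subset (Set.finite_range (fun p : Bool × Bool => [p.1, p.2]))
    rintro v ⟨hlen, -⟩
    match v, hlen with
    | [a, b], _ => exact ⟨(a, b), rfl⟩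
  have hsub : (↑({[true, true], [false, false], [false, true], [true, false]} :
      Finset (List Bool)) : Set (List Bool)) ⊆ F := by
    intro v hv
    simp only [Finset.coe_insert, Set.mem_insert_iff, Finset.coe_singleton,
      Set.mem_singleton_iff] at hv
    rcases hv with rfl | rfl | rfl | rfl
    · exact ⟨rfl, isFactor_pair h11 h11'⟩
    · exact ⟨rfl, isFactor_pair h00 h00'⟩
    · exact ⟨rfl, isFactor_pair hj01 hj01'⟩
    · exact ⟨rfl, isFactor_pair hj10 hj10'⟩
  have h4 : 4 ≤ F.ncard := by
    calc 4 = (↑({[true, true], [false, false], [false, true], [true, false]} :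
        Finset (List Bool)) : Set (List Bool)).ncard := by
          rw [Set.ncard_coe_finset]; decide
      _ ≤ F.ncard := Set.ncard_le_ncard hsub hfin
  have : Complexity w 2 = F.ncard := rfl
  omega
end

section
/- Let a, b be finite binary words with distinct first letters, |a| ≥ |b| ≥ 1, s a positive integer, and let w be a non ultimately periodic infinite binary word that is a concatenation of blocks from {a, b·a^s}. If p_w(k) = k+1 for k = (s+1)|a| + |b|, and w = γ_1 γ_2 ⋯ with each γ_i ∈ {A, B} (A = a, B = b·a^s), then there do not exist indices 1 < i < j with γ_i = γ_{i+1} = B and γ_j = γ_{j+1} = A. -/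
/-- The infinite word `w` is the infinite concatenation of the finite words
`blocks 0, blocks 1, blocks 2, …`. -/
def IsConcat {A : Type*} (w : ℕ → A) (blocks : ℕ → List A) : Prop :=
  (∀ n, blocks n ≠ []) ∧
  ∀ n j (h : j < (blocks n).length),
    w ((Finset.range n).sum (fun i => (blocks i).length) + j) = (blocks n).get ⟨j, h⟩

namespace NoBBAA

/-! ### Windows -/

def win (w : ℕ → Bool) (i ℓ : ℕ) : List Bool := (List.range ℓ).map (fun j => w (i + j))

lemma win_length (w : ℕ → Bool) (i ℓ : ℕ) : (win w i ℓ).length = ℓ := by simp [win]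

lemma isFactor_win (w : ℕ → Bool) (i ℓ : ℕ) : IsFactor w (win w i ℓ) :=
  ⟨i, by rw [win_length]; rfl⟩

lemma win_succ (w : ℕ → Bool) (i ℓ : ℕ) : win w i (ℓ+1) = win w i ℓ ++ [w (i + ℓ)] := by
  simp [win, List.range_succ]

lemma win_getElem (w : ℕ → Bool) (p ℓ x : ℕ) (h : x < (win w p ℓ).length) :
    (win w p ℓ)[x] = w (p + x) := by
  simp [win]

lemma win_cons (w : ℕ → Bool) (i ℓ : ℕ) : win w i (ℓ+1) = w i :: win w (i+1) ℓ := by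
  apply List.ext_getElem
  · simp [win]
  · intro x h1 h2
    rw [win_getElem]
    cases x with
    | zero => simp
    | succ x =>
        have h3 : x < (win w (i+1) ℓ).length := by
          rw [win_length]; rw [win_length] at h1; omega
        simp only [List.getElem_cons_succ]
        rw [win_getElem w (i+1) ℓ x h3]
        congr 1
        omega

/-! ### Right special factors -/

def RS (w : ℕ → Bool) (v : List Bool) : Prop :=
  IsFactor w (v ++ [false]) ∧ IsFactor w (v ++ [true])

lemma rs_of_two {w : ℕ → Bool} {v : List Bool} {c c' : Bool} (h : c ≠ c')
    (h1 : IsFactor w (v ++ [c])) (h2 : IsFactor w (v ++ [c'])) : RS w v := by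
  cases c <;> cases c' <;> first
    | exact absurd rfl h
    | exact ⟨h1, h2⟩
    | exact ⟨h2, h1⟩

lemma rs_ext {w : ℕ → Bool} {v : List Bool} (h : RS w v) (c : Bool) :
    IsFactor w (v ++ [c]) := by cases c; exacts [h.1, h.2]

/-! ### Finiteness -/

lemma finite_len (m : ℕ) : {l : List Bool | l.length = m}.Finite := by
  induction m with
  | zero =>
      have : {l : List Bool | l.length = 0} = {([] : List Bool)} := by
        ext l; simp [List.length_eq_zero_iff]
      rw [this]; exact Set.finite_singleton _
  | succ m ih =>
      have hsub : {l : List Bool | l.length = m+1} ⊆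
          Set.image2 List.cons Set.univ {l : List Bool | l.length = m} := by
        intro l hl
        cases l with
        | nil => simp at hl
        | cons x t =>
            refine ⟨x, Set.mem_univ x, t, ?_, rfl⟩
            simpa using hl
      exact ((Set.finite_univ).image2 _ ih).subset hsub

lemma finite_fac (w : ℕ → Bool) (m : ℕ) :
    {v : List Bool | v.length = m ∧ IsFactor w v}.Finite :=
  (finite_len m).subset (fun _ hv => hv.1)

/-! ### Morse–Hedlund direction : no right special factor ⇒ ultimately periodic -/

lemma exists_rs {w : ℕ → Bool} (hnp : ¬ UltimatelyPeriodic w) (m : ℕ) :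
    ∃ v : List Bool, v.length = m ∧ RS w v := by
  by_contra hno
  push_neg at hno
  have D : ∀ i i', win w i m = win w i' m → w (i + m) = w (i' + m) := by
    intro i i' he
    by_contra hne
    have h1 : IsFactor w (win w i m ++ [w (i+m)]) := by
      rw [← win_succ]; exact isFactor_win w i (m+1)
    have h2 : IsFactor w (win w i m ++ [w (i'+m)]) := by
      rw [he, ← win_succ]; exact isFactor_win w i' (m+1)
    exact hno _ (win_length w i m) (rs_of_two hne h1 h2)
  apply hnp
  rcases Nat.eq_zero_or_pos m with hm | hm
  · subst hm
    refine ⟨0, 1, le_refl 1, fun x _ => ?_⟩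
    have := D (x+1) x (rfl)
    simpa using this
  · haveI : Finite {l : List Bool // l.length = m} :=
      Set.Finite.to_subtype (finite_len m)
    obtain ⟨i, i', hne, he⟩ := Finite.exists_ne_map_eq_of_infinite
      (f := fun i : ℕ => (⟨win w i m, win_length w i m⟩ : {l : List Bool // l.length = m}))
    have he' : win w i m = win w i' m := congrArg Subtype.val he
    -- wlog i < i'
    have main : ∀ i i', i < i' → win w i m = win w i' m → UltimatelyPeriodic w := by
      intro i i' hlt he
      set p := i' - i with hp
      have hp1 : 1 ≤ p := by omega
      have hii : i' = i + p := by omega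
      have CL : ∀ d, win w (i+d) m = win w (i+d+p) m := by
        intro d
        induction d with
        | zero => simpa [hii] using he
        | succ d ih =>
            have hD := D _ _ ih
            have h1 : win w (i+d) (m+1) = win w (i+d+p) (m+1) := by
              rw [win_succ, win_succ, ih, hD]
            rw [win_cons, win_cons] at h1
            have := (List.cons.injEq _ _ _ _).mp h1
            have h2 := this.2
            have e1 : i + d + 1 = i + (d+1) := by omega
            have e2 : i + d + p + 1 = i + (d+1) + p := by omega
            rw [e1, e2] at h2
            exact h2
      refine ⟨i, p, hp1, fun x hx => ?_⟩
      obtain ⟨m', rfl⟩ : ∃ m', m = m' + 1 := ⟨m - 1, by omega⟩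
      have h := CL (x - i)
      have e1 : i + (x - i) = x := by omega
      rw [e1] at h
      rw [win_cons, win_cons] at h
      exact ((List.cons.injEq _ _ _ _).mp h).1.symm
    rcases Nat.lt_or_ge i i' with h | h
    · exact main i i' h he'
    · have h' : i' < i := by omega
      exact main i' i h' he'.symm

/-! ### Complexity counting -/

open Classical in
noncomputable def nxt (w : ℕ → Bool) (u : List Bool) : Bool :=
  if h : IsFactor w u then w (h.choose + u.length) else false

lemma nxt_eq {w : ℕ → Bool} {u : List Bool} (h : IsFactor w u) :
    nxt w u = w (h.choose + u.length) := by
  unfold nxt; rw [dif_pos h]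

lemma factor_nxt {w : ℕ → Bool} {u : List Bool} (h : IsFactor w u) :
    IsFactor w (u ++ [nxt w u]) := by
  rw [nxt_eq h]
  have hc : u = (List.range u.length).map (fun j => w (h.choose + j)) := h.choose_spec
  refine ⟨h.choose, ?_⟩
  have hl : (u ++ [w (h.choose + u.length)]).length = u.length + 1 := by simp
  rw [hl, List.range_succ, List.map_append]
  congr 1

lemma comp_succ_ge_one {w : ℕ → Bool} {m : ℕ} {v : List Bool}
    (hv : v.length = m) (hrs : RS w v) :
    Complexity w m + 1 ≤ Complexity w (m + 1) := by
  classical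
  set F : Set (List Bool) := {u : List Bool | u.length = m ∧ IsFactor w u} with hF
  set G : Set (List Bool) := {u : List Bool | u.length = m + 1 ∧ IsFactor w u} with hG
  have hFfin : F.Finite := finite_fac w m
  have hGfin : G.Finite := finite_fac w (m+1)
  set φ : List Bool → List Bool := fun u => u ++ [nxt w u] with hφ
  have himg : ∀ u ∈ F, φ u ∈ G := by
    intro u hu
    exact ⟨by simp [hφ, hu.1], factor_nxt hu.2⟩
  have hinj : Set.InjOn φ F := by
    intro u hu u' hu' he
    exact (List.append_inj he (by rw [hu.1, hu'.1])).1
  set x : List Bool := v ++ [! nxt w v] with hx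
  have hxG : x ∈ G := ⟨by simp [hx, hv], rs_ext hrs _⟩
  have hxnot : x ∉ φ '' F := by
    rintro ⟨u, hu, heq⟩
    have h1 := List.append_inj heq (by rw [hu.1, hv])
    have h2 : u = v := h1.1
    have h3 : nxt w u = ! nxt w v := by simpa using h1.2
    rw [h2] at h3
    exact (Bool.eq_not_self _).mp h3
  have hsub : insert x (φ '' F) ⊆ G := by
    intro y hy
    rcases hy with rfl | ⟨u, hu, rfl⟩
    · exact hxG
    · exact himg u hu
  have h1 : (insert x (φ '' F)).ncard = F.ncard + 1 := by
    rw [Set.ncard_insert_of_notMem hxnot (hFfin.image _), Set.ncard_image_of_injOn hinj]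
  have h2 : (insert x (φ '' F)).ncard ≤ G.ncard := Set.ncard_le_ncard hsub hGfin
  show F.ncard + 1 ≤ G.ncard
  omega

lemma comp_succ_ge_two {w : ℕ → Bool} {m : ℕ} {v v' : List Bool}
    (hv : v.length = m) (hv' : v'.length = m) (hne : v ≠ v')
    (hrs : RS w v) (hrs' : RS w v') :
    Complexity w m + 2 ≤ Complexity w (m + 1) := by
  classical
  set F : Set (List Bool) := {u : List Bool | u.length = m ∧ IsFactor w u} with hF
  set G : Set (List Bool) := {u : List Bool | u.length = m + 1 ∧ IsFactor w u} with hG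
  have hFfin : F.Finite := finite_fac w m
  have hGfin : G.Finite := finite_fac w (m+1)
  set φ : List Bool → List Bool := fun u => u ++ [nxt w u] with hφ
  have himg : ∀ u ∈ F, φ u ∈ G := by
    intro u hu
    exact ⟨by simp [hφ, hu.1], factor_nxt hu.2⟩
  have hinj : Set.InjOn φ F := by
    intro u hu u' hu' he
    exact (List.append_inj he (by rw [hu.1, hu'.1])).1
  set x : List Bool := v ++ [! nxt w v] with hx
  set x' : List Bool := v' ++ [! nxt w v'] with hx'
  have hxG : x ∈ G := ⟨by simp [hx, hv], rs_ext hrs _⟩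
  have hx'G : x' ∈ G := ⟨by simp [hx', hv'], rs_ext hrs' _⟩
  have hxnot : x ∉ φ '' F := by
    rintro ⟨u, hu, heq⟩
    have h1 := List.append_inj heq (by rw [hu.1, hv])
    have h2 : u = v := h1.1
    have h3 : nxt w u = ! nxt w v := by simpa using h1.2
    rw [h2] at h3
    exact (Bool.eq_not_self _).mp h3
  have hx'not : x' ∉ φ '' F := by
    rintro ⟨u, hu, heq⟩
    have h1 := List.append_inj heq (by rw [hu.1, hv'])
    have h2 : u = v' := h1.1
    have h3 : nxt w u = ! nxt w v' := by simpa using h1.2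
    rw [h2] at h3
    exact (Bool.eq_not_self _).mp h3
  have hxx' : x ≠ x' := by
    intro h
    exact hne (List.append_inj h (by rw [hv, hv'])).1
  have hsub : insert x (insert x' (φ '' F)) ⊆ G := by
    intro y hy
    rcases hy with rfl | hy
    · exact hxG
    rcases hy with rfl | ⟨u, hu, rfl⟩
    · exact hx'G
    · exact himg u hu
  have h1 : (insert x (insert x' (φ '' F))).ncard = F.ncard + 2 := by
    rw [Set.ncard_insert_of_notMem (by
        intro hmem
        rcases hmem with h | h
        · exact hxx' h
        · exact hxnot h) ((hFfin.image _).insert x'),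
      Set.ncard_insert_of_notMem hx'not (hFfin.image _),
      Set.ncard_image_of_injOn hinj]
  have h2 : (insert x (insert x' (φ '' F))).ncard ≤ G.ncard := Set.ncard_le_ncard hsub hGfin
  show F.ncard + 2 ≤ G.ncard
  omega

lemma comp_zero (w : ℕ → Bool) : Complexity w 0 = 1 := by
  have h : {v : List Bool | v.length = 0 ∧ IsFactor w v} = {([] : List Bool)} := by
    ext v
    constructor
    · rintro ⟨h1, -⟩
      simpa [List.length_eq_zero_iff] using h1
    · rintro rfl
      exact ⟨rfl, ⟨0, by simp⟩⟩
  show Set.ncard {v : List Bool | v.length = 0 ∧ IsFactor w v} = 1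
  rw [h, Set.ncard_singleton]

lemma comp_ge {w : ℕ → Bool} (hnp : ¬ UltimatelyPeriodic w) (m : ℕ) :
    m + 1 ≤ Complexity w m := by
  induction m with
  | zero => rw [comp_zero]
  | succ m ih =>
      obtain ⟨v, hv, hrs⟩ := exists_rs hnp m
      have := comp_succ_ge_one hv hrs
      omega

lemma comp_final {w : ℕ → Bool} (hnp : ¬ UltimatelyPeriodic w) {m K : ℕ}
    (hmK : m + 1 ≤ K) {v v' : List Bool}
    (hv : v.length = m) (hv' : v'.length = m) (hne : v ≠ v')
    (hrs : RS w v) (hrs' : RS w v') :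
    K + 2 ≤ Complexity w K := by
  have h2 := comp_succ_ge_two hv hv' hne hrs hrs'
  have h3 := comp_ge hnp m
  have chain : ∀ d, m + 3 + d ≤ Complexity w (m + 1 + d) := by
    intro d
    induction d with
    | zero => simp only [Nat.add_zero]; omega
    | succ d ih =>
        obtain ⟨u, hu, hurs⟩ := exists_rs hnp (m + 1 + d)
        have := comp_succ_ge_one hu hurs
        have e : m + 1 + d + 1 = m + 1 + (d+1) := by omega
        rw [e] at this
        omega
  have := chain (K - m - 1)
  have e : m + 1 + (K - m - 1) = K := by omega
  rw [e] at this
  omega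

end NoBBAA
/-! ### Suffixes -/

namespace NoBBAA2
open NoBBAA

def sfx (X : List Bool) (ℓ : ℕ) : List Bool := X.drop (X.length - ℓ)

lemma sfx_length {X : List Bool} {ℓ : ℕ} (h : ℓ ≤ X.length) : (sfx X ℓ).length = ℓ := by
  simp only [sfx, List.length_drop]; omega

lemma sfx_zero (X : List Bool) : sfx X 0 = [] := by
  simp [sfx]

lemma sfx_append {X Y : List Bool} {ℓ : ℕ} (h : ℓ ≤ Y.length) :
    sfx (X ++ Y) ℓ = sfx Y ℓ := by
  simp only [sfx, List.length_append]
  rw [show X.length + Y.length - ℓ = X.length + (Y.length - ℓ) by omega]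
  rw [List.drop_length_add_append]

lemma sfx_append_left {X u : List Bool} {ℓ : ℕ} (h : ℓ ≤ X.length) :
    sfx (X ++ u) (ℓ + u.length) = sfx X ℓ ++ u := by
  simp only [sfx, List.length_append]
  rw [show X.length + u.length - (ℓ + u.length) = X.length - ℓ by omega]
  rw [List.drop_append,
    show X.length - ℓ - X.length = 0 by omega, List.drop_zero]

lemma sfx_sfx {X : List Bool} {ℓ ℓ' : ℕ} (h' : ℓ' ≤ ℓ) (h : ℓ ≤ X.length) :
    sfx (sfx X ℓ) ℓ' = sfx X ℓ' := by
  simp only [sfx, List.length_drop, List.drop_drop]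
  congr 1
  omega

lemma sfx_restrict {X Y : List Bool} {ℓ ℓ' : ℕ} (he : sfx X ℓ = sfx Y ℓ)
    (h' : ℓ' ≤ ℓ) (hX : ℓ ≤ X.length) (hY : ℓ ≤ Y.length) :
    sfx X ℓ' = sfx Y ℓ' := by
  rw [← sfx_sfx h' hX, he, sfx_sfx h' hY]

/-! ### The infinite concatenation -/

def Cw (blocks : ℕ → List Bool) (m : ℕ) : List Bool := ((List.range m).map blocks).flatten

def Ew (blocks : ℕ → List Bool) (m : ℕ) : ℕ := (Finset.range m).sum (fun i => (blocks i).length)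

lemma Cw_succ (blocks : ℕ → List Bool) (m : ℕ) :
    Cw blocks (m+1) = Cw blocks m ++ blocks m := by
  simp [Cw, List.range_succ]

lemma Cw_length (blocks : ℕ → List Bool) (m : ℕ) : (Cw blocks m).length = Ew blocks m := by
  induction m with
  | zero => simp [Cw, Ew]
  | succ m ih =>
      rw [Cw_succ, List.length_append, ih]
      simp [Ew, Finset.sum_range_succ]

lemma Ew_succ (blocks : ℕ → List Bool) (m : ℕ) :
    Ew blocks (m+1) = Ew blocks m + (blocks m).length := by
  simp [Ew, Finset.sum_range_succ]

lemma w_eq_Cw {w : ℕ → Bool} {blocks : ℕ → List Bool} (hc : IsConcat w blocks) (m : ℕ) :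
    ∀ q (hq : q < (Cw blocks m).length), w q = (Cw blocks m)[q] := by
  induction m with
  | zero => intro q hq; simp [Cw] at hq
  | succ m ih =>
      intro q hq
      have hCs := Cw_succ blocks m
      rw [List.getElem_of_eq hCs hq]
      have hq' : q < (Cw blocks m).length + (blocks m).length := by
        have := hq
        rw [hCs, List.length_append] at this
        exact this
      rcases Nat.lt_or_ge q (Cw blocks m).length with h | h
      · rw [List.getElem_append_left h]
        exact ih q h
      · have hlen := Cw_length blocks m
        have hj : q - (Cw blocks m).length < (blocks m).length := by omega
        have h2 := hc.2 m (q - (Cw blocks m).length) hj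
        rw [List.getElem_append_right h]
        rw [List.get_eq_getElem] at h2
        have e : (Finset.range m).sum (fun i => (blocks i).length) + (q - (Cw blocks m).length) = q := by
          have : (Finset.range m).sum (fun i => (blocks i).length) = Ew blocks m := rfl
          omega
        rw [e] at h2
        exact h2

lemma win_boundary {w : ℕ → Bool} {blocks : ℕ → List Bool} (hc : IsConcat w blocks)
    (m ℓ : ℕ) (hℓ : ℓ ≤ Ew blocks m) :
    win w (Ew blocks m - ℓ) ℓ = sfx (Cw blocks m) ℓ := by
  have hCl := Cw_length blocks m
  apply List.ext_getElem
  · rw [win_length, sfx_length (by omega)]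
  · intro x h1 h2
    rw [win_getElem]
    simp only [sfx]
    rw [List.getElem_drop]
    rw [← w_eq_Cw hc m _ (by
      rw [win_length] at h1
      omega)]
    congr 1
    omega

/-- A factor ending at the block boundary `Ew blocks m`, together with the following letter. -/
lemma factor_at_boundary {w : ℕ → Bool} {blocks : ℕ → List Bool} (hc : IsConcat w blocks)
    (m : ℕ) (V J : List Bool) (hC : Cw blocks m = J ++ V) (ℓ : ℕ) (hℓ : ℓ ≤ V.length) :
    IsFactor w (sfx V ℓ ++ [w (Ew blocks m)]) := by
  have hEw : ℓ ≤ Ew blocks m := by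
    rw [← Cw_length, hC, List.length_append]; omega
  have h1 : win w (Ew blocks m - ℓ) (ℓ+1) = sfx V ℓ ++ [w (Ew blocks m)] := by
    rw [win_succ, win_boundary hc m ℓ hEw, hC, sfx_append hℓ, Nat.sub_add_cancel hEw]
  rw [← h1]
  exact isFactor_win _ _ _

lemma first_letter {w : ℕ → Bool} {blocks : ℕ → List Bool} (hc : IsConcat w blocks)
    (m : ℕ) : w (Ew blocks m) = (blocks m).head (hc.1 m) := by
  have h0 : 0 < (blocks m).length := List.length_pos_iff.mpr (hc.1 m)
  have h2 := hc.2 m 0 h0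
  rw [List.get_eq_getElem] at h2
  have e : (Finset.range m).sum (fun i => (blocks i).length) + 0 = Ew blocks m := by
    simp [Ew]
  rw [e] at h2
  rw [h2]
  exact List.getElem_zero h0

/-! ### The key impossibility: `W` and `W ++ a` cannot share a suffix of length `|W| - 1` -/

lemma key_ne (a b : List Bool) (ha : a ≠ []) (hb : b ≠ [])
    (hh : a.head ha ≠ b.head hb) (s : ℕ) :
    sfx (a ++ (b ++ (List.replicate s a).flatten))
        ((a ++ (b ++ (List.replicate s a).flatten)).length - 1)
      ≠ sfx ((a ++ (b ++ (List.replicate s a).flatten)) ++ a)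
        ((a ++ (b ++ (List.replicate s a).flatten)).length - 1) := by
  intro heq
  set α := a.head ha with hα
  set β := b.head hb with hβ
  set F := (List.replicate s a).flatten with hF
  have hacons : α :: a.tail = a := List.cons_head_tail ha
  have hbcons : β :: b.tail = b := List.cons_head_tail hb
  have haW : 1 ≤ a.length := List.length_pos_iff.mpr ha
  set W := a ++ (b ++ F) with hW
  have hWlen : W.length = a.length + (b.length + F.length) := by simp [hW]
  have hWc : W = α :: (a.tail ++ (b ++ F)) := by
    rw [hW, ← hacons]; rfl
  have hL : sfx W (W.length - 1) = a.tail ++ (b ++ F) := by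
    unfold sfx
    rw [show W.length - (W.length - 1) = 1 by omega]
    rw [hWc, List.drop_one, List.tail_cons]
  have hR : sfx (W ++ a) (W.length - 1) = (b.tail ++ F) ++ a := by
    unfold sfx
    rw [List.length_append,
      show W.length + a.length - (W.length - 1) = a.length + 1 by omega]
    have hWa : W ++ a = a ++ ((b ++ F) ++ a) := by rw [hW]; simp
    rw [hWa, List.drop_length_add_append]
    have hZ : (b ++ F) ++ a = β :: ((b.tail ++ F) ++ a) := by
      rw [← hbcons]; rfl
    rw [hZ, List.drop_one, List.tail_cons]
  rw [hL, hR] at heq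
  have hcount := congrArg (List.count α) heq
  simp only [List.count_append] at hcount
  have hca : List.count α a = List.count α a.tail + 1 := by
    conv_lhs => rw [← hacons]
    rw [List.count_cons_self]
  have hcb : List.count α b = List.count α b.tail := by
    conv_lhs => rw [← hbcons]
    rw [List.count_cons_of_ne hh.symm]
  omega

/-! ### Tail of `a`'s forces ultimate periodicity -/

lemma up_tail {w : ℕ → Bool} {blocks : ℕ → List Bool} {a : List Bool}
    (hconcat : IsConcat w blocks) (ha : a ≠ []) (N0 : ℕ)
    (htail : ∀ x, N0 ≤ x → blocks x = a) : UltimatelyPeriodic w := by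
  have hapos : 0 < a.length := List.length_pos_iff.mpr ha
  have hE : ∀ r, Ew blocks (N0 + r) = Ew blocks N0 + r * a.length := by
    intro r
    induction r with
    | zero => simp
    | succ r ih =>
        rw [show N0 + (r+1) = (N0+r)+1 from rfl, Ew_succ, ih, htail (N0+r) (by omega)]
        ring
  have hkey : ∀ r o, (ho : o < a.length) → w (Ew blocks N0 + r * a.length + o) = a[o] := by
    intro r o ho
    have hol : o < (blocks (N0+r)).length := by rw [htail (N0+r) (by omega)]; exact ho
    have h1 := hconcat.2 (N0 + r) o hol
    rw [List.get_eq_getElem] at h1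
    have e : (Finset.range (N0+r)).sum (fun i => (blocks i).length) = Ew blocks (N0+r) := rfl
    rw [e, hE r] at h1
    rw [h1]
    simp only [htail (N0+r) (by omega : N0 ≤ N0 + r)]
  refine ⟨Ew blocks N0, a.length, hapos, fun x hx => ?_⟩
  set q := x - Ew blocks N0 with hq
  have hxq : x = Ew blocks N0 + q := by omega
  set r := q / a.length with hr
  set o := q % a.length with ho
  have hoa : o < a.length := Nat.mod_lt _ hapos
  have h1 : a.length * r + o = q := Nat.div_add_mod q a.length
  have e1 : x = Ew blocks N0 + r * a.length + o := by
    rw [hxq, ← h1]; ring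
  have e2 : x + a.length = Ew blocks N0 + (r+1) * a.length + o := by
    rw [hxq, ← h1]; ring
  rw [e2, e1, hkey (r+1) o hoa, hkey r o hoa]

end NoBBAA2


open NoBBAA NoBBAA2

/-- Lemma 3.1: with `A = a` and `B = b·a^s`, if `w ∈ {A, B}^ℕ` is not ultimately periodic,
`p_w(k) = k+1` with `k = (s+1)|a| + |b|`, then `BB` and `AA` cannot both occur (except in
the first positions) in the block representation `w = γ₁γ₂⋯`. -/
theorem no_BB_before_AA (a b : List Bool) (ha : a ≠ []) (hb : b ≠ [])
    (hhead : a.head ha ≠ b.head hb) (hlen : b.length ≤ a.length)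
    (s : ℕ) (hs : 1 ≤ s)
    (w : ℕ → Bool) (blocks : ℕ → List Bool)
    (hblocks : ∀ i, blocks i = a ∨ blocks i = b ++ (List.replicate s a).flatten)
    (hconcat : IsConcat w blocks)
    (hnp : ¬ UltimatelyPeriodic w)
    (hcomp : Complexity w ((s + 1) * a.length + b.length)
      = (s + 1) * a.length + b.length + 1) :
    ¬ ∃ i j : ℕ, 1 ≤ i ∧ i < j ∧
      blocks i = b ++ (List.replicate s a).flatten ∧
      blocks (i + 1) = b ++ (List.replicate s a).flatten ∧
      blocks j = a ∧ blocks (j + 1) = a := by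
  rintro ⟨i, j, hi1, hij, hBi, hBi1, hAj, hAj1⟩
  classical
  set Fl : List Bool := (List.replicate s a).flatten with hFl
  set Bw : List Bool := b ++ Fl with hBw
  set W : List Bool := a ++ Bw with hWdef
  have hapos : 0 < a.length := List.length_pos_iff.mpr ha
  have hbpos : 0 < b.length := List.length_pos_iff.mpr hb
  have hFlen : ∀ r : ℕ, ((List.replicate r a).flatten).length = r * a.length := by
    intro r
    rw [List.length_flatten, List.map_replicate, List.sum_replicate, smul_eq_mul]
  have hWlen : W.length = a.length + (b.length + s * a.length) := by
    simp only [hWdef, hBw, hFl, List.length_append, hFlen]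
  set K : ℕ := (s + 1) * a.length + b.length with hKdef
  have hKW : W.length = K := by
    rw [hWlen, hKdef]; ring
  have hsa : a.length ≤ s * a.length := Nat.le_mul_of_pos_left _ hs
  have hKpos : 3 ≤ K := by omega
  have hblocks' : ∀ x, blocks x = a ∨ blocks x = Bw := hblocks
  have hABne : a ≠ Bw := by
    intro h
    have h2 := congrArg List.length h
    rw [hBw, List.length_append, hFl, hFlen] at h2
    omega
  have hend : ∀ x, ∃ Z, blocks x = Z ++ a := by
    intro x
    rcases hblocks' x with h | h
    · exact ⟨[], by rw [h]; rfl⟩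
    · refine ⟨b ++ (List.replicate (s-1) a).flatten, ?_⟩
      rw [h, hBw, hFl]
      rw [show s = (s-1) + 1 by omega, List.replicate_succ', List.flatten_append]
      simp [List.append_assoc]
  have hj2 : i + 2 ≤ j := by
    rcases Nat.lt_or_ge j (i+2) with h | h
    · exfalso
      have he : j = i + 1 := by omega
      rw [he] at hAj
      exact hABne (hAj.symm.trans hBi1)
    · exact h
  have hBinf : ∀ N0, ∃ x, N0 ≤ x ∧ blocks x = Bw := by
    intro N0
    by_contra hcon
    push_neg at hcon
    exact hnp (up_tail hconcat ha N0 (fun x hx => (hblocks' x).resolve_right (hcon x hx)))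
  -- extract the configuration  B A^t B  with t ≥ 2
  set n : ℕ := Nat.findGreatest (fun x => blocks x = Bw) j with hns
  have hn_le : n ≤ j := by rw [hns]; exact Nat.findGreatest_le j
  have hn_spec : blocks n = Bw := by
    rw [hns]
    exact Nat.findGreatest_spec (P := fun x => blocks x = Bw) (show i+1 ≤ j by omega) hBi1
  have hn_ge : i + 1 ≤ n := by
    rw [hns]
    exact Nat.le_findGreatest (by omega) hBi1
  have hn_lt_j : n < j := by
    rcases Nat.lt_or_ge n j with h | h
    · exact h
    · exfalso
      have he : n = j := by omega
      rw [he] at hn_spec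
      exact hABne (hAj.symm.trans hn_spec)
  have hn_max : ∀ x, n < x → x ≤ j → blocks x = a := by
    intro x h1 h2
    refine (hblocks' x).resolve_right
      (Nat.findGreatest_is_greatest (P := fun x => blocks x = Bw) ?_ h2)
    rw [← hns]; exact h1
  have hEx' : ∃ x, j + 1 ≤ x ∧ blocks x = Bw := hBinf (j+1)
  set n' : ℕ := Nat.find hEx' with hn's
  have hn'_spec : j + 1 ≤ n' ∧ blocks n' = Bw := by
    rw [hn's]; exact Nat.find_spec hEx'
  have hn'_min : ∀ x, x < n' → ¬(j + 1 ≤ x ∧ blocks x = Bw) := by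
    intro x hx
    refine Nat.find_min hEx' ?_
    rw [← hn's]; exact hx
  have hn'_ge : j + 2 ≤ n' := by
    rcases Nat.lt_or_ge n' (j+2) with h | h
    · exfalso
      have he : n' = j + 1 := by omega
      rw [he] at hn'_spec
      exact hABne (hAj1.symm.trans hn'_spec.2)
    · exact h
  have hrun : ∀ x, n < x → x < n' → blocks x = a := by
    intro x h1 h2
    rcases Nat.lt_or_ge j x with h3 | h3
    · exact (hblocks' x).resolve_right (fun hB => hn'_min x h2 ⟨by omega, hB⟩)
    · exact hn_max x h1 h3
  set t : ℕ := n' - n - 1 with hts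
  have ht2 : 2 ≤ t := by omega
  have hnt : n + 1 + t = n' := by omega
  have hn1 : 1 ≤ n := by omega
  have hArun : ∀ r, r < t → blocks (n + 1 + r) = a := by
    intro r hr
    exact hrun _ (by omega) (by omega)
  have hBend : blocks (n + 1 + t) = Bw := by rw [hnt]; exact hn'_spec.2
  -- decompositions of prefixes of w at block boundaries
  have hdecomp : ∀ (n0 : ℕ), 1 ≤ n0 → blocks n0 = Bw →
      ∀ r, (∀ r', r' < r → blocks (n0 + 1 + r') = a) →
      ∃ J, Cw blocks (n0 + 1 + r) = J ++ (W ++ (List.replicate r a).flatten) := by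
    intro n0 hn0 hBn0 r
    induction r with
    | zero =>
        intro _
        obtain ⟨n1, rfl⟩ : ∃ n1, n0 = n1 + 1 := ⟨n0 - 1, by omega⟩
        obtain ⟨Z, hZ⟩ := hend n1
        refine ⟨Cw blocks n1 ++ Z, ?_⟩
        show Cw blocks ((n1 + 1) + 1) = _
        rw [Cw_succ, Cw_succ, hZ, hBn0]
        simp [hWdef, List.append_assoc]
    | succ r ih =>
        intro hA
        obtain ⟨J, hJ⟩ := ih (fun r' hr' => hA r' (by omega))
        refine ⟨J, ?_⟩
        show Cw blocks ((n0 + 1 + r) + 1) = _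
        rw [Cw_succ, hJ, hA r (by omega)]
        rw [List.replicate_succ', List.flatten_append]
        simp [List.append_assoc]
  -- the splitting length m0
  have hKne : sfx W (W.length - 1) ≠ sfx (W ++ a) (W.length - 1) := by
    rw [hWdef, hBw, hFl]
    exact key_ne a b ha hb hhead s
  have hKne' : sfx W (K - 1) ≠ sfx (W ++ a) (K - 1) := by
    rw [← hKW]; exact hKne
  have hPex : ∃ ℓ, ¬ (sfx W ℓ = sfx (W ++ a) ℓ) := ⟨K - 1, hKne'⟩
  set m0 : ℕ := Nat.find hPex with hm0
  have hm0_spec : ¬ (sfx W m0 = sfx (W ++ a) m0) := by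
    conv in m0 => rw [hm0]
    exact Nat.find_spec hPex
  have hm0_le : m0 ≤ K - 1 := by rw [hm0]; exact Nat.find_min' hPex hKne'
  have hm0_pos : 0 < m0 := by
    rcases Nat.eq_zero_or_pos m0 with h | h
    · exfalso; apply hm0_spec; rw [h, sfx_zero, sfx_zero]
    · exact h
  set rho : ℕ := m0 - 1 with hrho
  have hrhom : m0 = rho + 1 := by omega
  have hrhoeq : sfx W rho = sfx (W ++ a) rho := by
    have h := Nat.find_min hPex (show rho < Nat.find hPex by rw [← hm0]; omega)
    exact not_not.mp h
  have hm0W : m0 ≤ W.length := by omega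
  have hrhoW : rho ≤ W.length := by omega
  -- the shift lemma
  have hSH : ∀ r, 1 ≤ r →
      sfx (W ++ (List.replicate r a).flatten) m0
        = sfx (W ++ (List.replicate (r+1) a).flatten) m0 := by
    intro r hr
    have hflen : ((List.replicate r a).flatten).length = r * a.length := hFlen r
    have e1 := sfx_append_left (X := W) (u := (List.replicate r a).flatten) hrhoW
    have e2 := sfx_append_left (X := W ++ a) (u := (List.replicate r a).flatten)
      (show rho ≤ (W ++ a).length by rw [List.length_append]; omega)
    rw [hflen] at e1 e2
    have h1 : sfx (W ++ (List.replicate r a).flatten) (rho + r * a.length)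
        = sfx ((W ++ a) ++ (List.replicate r a).flatten) (rho + r * a.length) := by
      rw [e1, e2, hrhoeq]
    have h2 : (W ++ a) ++ (List.replicate r a).flatten
        = W ++ (List.replicate (r+1) a).flatten := by
      rw [List.replicate_succ, List.flatten_cons]
      simp [List.append_assoc]
    rw [h2] at h1
    have hrpos : 0 < r * a.length := Nat.mul_pos (by omega) hapos
    have hmono : r * a.length ≤ (r+1) * a.length := Nat.mul_le_mul_right _ (by omega)
    refine sfx_restrict h1 (by omega) ?_ ?_
    · rw [List.length_append, hflen]; omega
    · rw [List.length_append, hFlen (r+1)]; omega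
  have hNE : ∀ r, 1 ≤ r → sfx W m0 ≠ sfx (W ++ (List.replicate r a).flatten) m0 := by
    intro r hr
    induction r with
    | zero => omega
    | succ r ih =>
        rcases Nat.eq_zero_or_pos r with h0 | h0
        · subst h0
          intro heq
          have e : (List.replicate 1 a).flatten = a := by simp
          rw [e] at heq
          exact hm0_spec heq
        · intro heq
          rw [← hSH r h0] at heq
          exact ih h0 heq
  -- the two right special factors of length m0
  obtain ⟨Ji, hJi0⟩ := hdecomp i hi1 hBi 0 (fun r' hr' => absurd hr' (Nat.not_lt_zero r'))
  have hJi : Cw blocks (i + 1) = Ji ++ W := by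
    have e : W ++ (List.replicate 0 a).flatten = W := by simp
    rw [← e]
    exact hJi0
  obtain ⟨Jn, hJn0⟩ := hdecomp n hn1 hn_spec 0 (fun r' hr' => absurd hr' (Nat.not_lt_zero r'))
  have hJn : Cw blocks (n + 1) = Jn ++ W := by
    have e : W ++ (List.replicate 0 a).flatten = W := by simp
    rw [← e]
    exact hJn0
  obtain ⟨Jt1, hJt1⟩ := hdecomp n hn1 hn_spec (t-1) (fun r' hr' => hArun r' (by omega))
  obtain ⟨Jt, hJt⟩ := hdecomp n hn1 hn_spec t (fun r' hr' => hArun r' hr')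
  -- first letters
  have halpha : ∀ m, blocks m = a → w (Ew blocks m) = a.head ha := by
    intro m hm
    rw [first_letter hconcat m]
    simp only [hm]
  have hbeta : ∀ m, blocks m = Bw → w (Ew blocks m) = b.head hb := by
    intro m hm
    rw [first_letter hconcat m]
    have e0 : b = b.head hb :: b.tail := (List.cons_head_tail hb).symm
    have e : Bw = b.head hb :: (b.tail ++ Fl) := by
      rw [hBw]
      conv_lhs => rw [e0]
      rfl
    simp only [hm, e, List.head_cons]
  have hu0len : (sfx W m0).length = m0 := sfx_length hm0W
  have hflent1 : ((List.replicate (t-1) a).flatten).length = (t-1) * a.length := hFlen _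
  have hv0len : (sfx (W ++ (List.replicate (t-1) a).flatten) m0).length = m0 :=
    sfx_length (by rw [List.length_append, hflent1]; omega)
  have hu0rs : RS w (sfx W m0) := by
    have h1 : IsFactor w (sfx W m0 ++ [w (Ew blocks (i+1))]) :=
      factor_at_boundary hconcat (i+1) W Ji hJi m0 hm0W
    have h2 : IsFactor w (sfx W m0 ++ [w (Ew blocks (n+1))]) :=
      factor_at_boundary hconcat (n+1) W Jn hJn m0 hm0W
    rw [hbeta (i+1) hBi1] at h1
    rw [halpha (n+1) (hArun 0 (by omega))] at h2
    exact rs_of_two (Ne.symm hhead) h1 h2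
  have hv0rs : RS w (sfx (W ++ (List.replicate (t-1) a).flatten) m0) := by
    have h1 : IsFactor w
        (sfx (W ++ (List.replicate (t-1) a).flatten) m0 ++ [w (Ew blocks (n+1+(t-1)))]) :=
      factor_at_boundary hconcat (n+1+(t-1)) _ Jt1 hJt1 m0
        (by rw [List.length_append, hflent1]; omega)
    rw [halpha (n+1+(t-1)) (hArun (t-1) (by omega))] at h1
    have h2 : IsFactor w
        (sfx (W ++ (List.replicate t a).flatten) m0 ++ [w (Ew blocks (n+1+t))]) :=
      factor_at_boundary hconcat (n+1+t) _ Jt hJt m0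
        (by rw [List.length_append, hFlen t]
            have h3 : a.length ≤ t * a.length := Nat.le_mul_of_pos_left _ (by omega)
            omega)
    have hEQ : sfx (W ++ (List.replicate (t-1) a).flatten) m0
        = sfx (W ++ (List.replicate t a).flatten) m0 := by
      have h := hSH (t-1) (by omega)
      rw [show t - 1 + 1 = t by omega] at h
      exact h
    rw [← hEQ] at h2
    rw [hbeta (n+1+t) hBend] at h2
    exact rs_of_two hhead h1 h2
  have hune : sfx W m0 ≠ sfx (W ++ (List.replicate (t-1) a).flatten) m0 :=
    hNE (t-1) (by omega)
  have hfinal := comp_final hnp (show m0 + 1 ≤ K by omega) hu0len hv0len hune hu0rs hv0rs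
  rw [hcomp] at hfinal
  omega
end
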